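/- Let p = 2, r ≥ 0, and let k ≥ 0 and n be integers with 2^{r+1}·k + 2^r ≤ n < 2^{r+1}·(k+1) (i.e., the r-th binary digit of n equals 1). Then for all x_0,…,x_n ∈ 𝔽_2: argmax^{(r)}(x_0, x_1, …, x_n) = Σ_{j=0}^{k} Σ_{i=0}^{min(2^r − 1, n − 2^{r+1}j − 2^r)} (1 + x_0)(1 + x_1)⋯(1 + x_{2^{r+1}j + 2^r + i − 1}) · x_{2^{r+1}j + 2^r + i} in 𝔽_2. -/

import Mathlib

/-- The maximum of the components of `x`, where elements of `ZMod p` are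
compared via their canonical natural-number representatives. -/
def fmax {p n : ℕ} (x : Fin n → ZMod p) : ZMod p :=
  ((Finset.univ.sup fun i => (x i).val : ℕ) : ZMod p)

/-- The least index `i` with `x i = fmax x`, as a natural number. -/
noncomputable def argmaxN {p n : ℕ} (x : Fin n → ZMod p) : ℕ :=
  sInf {i : ℕ | ∃ h : i < n, x ⟨i, h⟩ = fmax x}

/-- The `r`-th digit of the base-`p` expansion of `k`, as an element of `ZMod p`. -/
def digitP (p k r : ℕ) : ZMod p := (((k / p ^ r) % p : ℕ) : ZMod p)

/-- Polynomial expression of the low-pass function `χ(z < t)`. -/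
def Lp (p t : ℕ) (z : ZMod p) : ZMod p :=
  ∑ k ∈ Finset.range t, (1 - (z - (k : ZMod p)) ^ (p - 1))

/-- Polynomial expression of the Kronecker delta `χ(z = t)`. -/
def deltaP (p t : ℕ) (z : ZMod p) : ZMod p := 1 - (z - (t : ZMod p)) ^ (p - 1)

lemma zmod2_ne_zero {b : ZMod 2} (h : b ≠ 0) : b = 1 := by revert h; revert b; decide

lemma zmod2_ne_one {b : ZMod 2} (h : b ≠ 1) : b = 0 := by revert h; revert b; decide

lemma bit_of_decomp (r j i : ℕ) (hi : i < 2 ^ r) :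
    (2 ^ (r + 1) * j + 2 ^ r + i) / 2 ^ r % 2 = 1 := by
  have he : 2 ^ (r + 1) * j + 2 ^ r + i = 2 ^ r * (2 * j + 1) + i := by rw [pow_succ]; ring
  rw [he, Nat.mul_add_div (pow_pos (by norm_num : (0:ℕ) < 2) r), Nat.div_eq_of_lt hi]
  omega

lemma div_of_decomp (r j i : ℕ) (hi : i < 2 ^ r) :
    (2 ^ (r + 1) * j + 2 ^ r + i) / 2 ^ (r + 1) = j := by
  rw [add_assoc, Nat.mul_add_div (pow_pos (by norm_num : (0:ℕ) < 2) _),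
    Nat.div_eq_of_lt (by rw [pow_succ]; omega)]
  omega

theorem argmax_digit_p_two_recursive (r k n : ℕ)
    (h1 : 2 ^ (r + 1) * k + 2 ^ r ≤ n) (h2 : n < 2 ^ (r + 1) * (k + 1))
    (x : ℕ → ZMod 2) :
    digitP 2 (argmaxN fun i : Fin (n + 1) => x i) r =
      ∑ j ∈ Finset.range (k + 1),
        ∑ i ∈ Finset.range (min (2 ^ r - 1) (n - 2 ^ (r + 1) * j - 2 ^ r) + 1),
          (∏ m ∈ Finset.range (2 ^ (r + 1) * j + 2 ^ r + i), (1 + x m)) *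
            x (2 ^ (r + 1) * j + 2 ^ r + i) := by
  have hP1 : 1 ≤ 2 ^ r := Nat.one_le_two_pow
  have hQ : 2 ^ (r + 1) = 2 * 2 ^ r := by rw [pow_succ]; ring
  -- indices appearing in the RHS are ≤ n
  have hidx : ∀ j ∈ Finset.range (k + 1),
      ∀ i ∈ Finset.range (min (2 ^ r - 1) (n - 2 ^ (r + 1) * j - 2 ^ r) + 1),
      2 ^ (r + 1) * j + 2 ^ r + i ≤ n := by
    intro j hj i hi
    simp only [Finset.mem_range] at hj hi
    have hjk : 2 ^ (r + 1) * j ≤ 2 ^ (r + 1) * k := Nat.mul_le_mul_left _ (by omega)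
    omega
  by_cases hall : ∀ m ≤ n, x m = 0
  · -- all components are zero
    have hfmax : fmax (fun i : Fin (n + 1) => x i) = 0 := by
      unfold fmax
      have h0 : (Finset.univ.sup fun i : Fin (n + 1) => (x i).val) = 0 := by
        apply Nat.le_antisymm _ (Nat.zero_le _)
        apply Finset.sup_le
        intro i _
        rw [hall i (Nat.lt_succ_iff.mp i.isLt)]
        simp
      rw [h0]; simp
    have hamax : argmaxN (fun i : Fin (n + 1) => x i) = 0 := by
      unfold argmaxN
      apply Nat.sInf_eq_zero.mpr
      left
      exact ⟨Nat.succ_pos n, by rw [hfmax]; exact hall 0 (Nat.zero_le n)⟩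
    rw [hamax]
    unfold digitP
    simp only [Nat.zero_div, Nat.zero_mod, Nat.cast_zero]
    symm
    apply Finset.sum_eq_zero
    intro j hj
    apply Finset.sum_eq_zero
    intro i hi
    rw [hall _ (hidx j hj i hi), mul_zero]
  · push_neg at hall
    have hex : ∃ m, m ≤ n ∧ x m ≠ 0 := by
      obtain ⟨w, hw1, hw2⟩ := hall; exact ⟨w, hw1, hw2⟩
    set a := Nat.find hex with ha_def
    obtain ⟨han, hxa'⟩ := Nat.find_spec hex
    have hxa : x a = 1 := zmod2_ne_zero hxa'
    have hmin : ∀ m < a, x m = 0 := by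
      intro m hm
      by_contra hne
      exact Nat.find_min hex hm ⟨le_trans (le_of_lt hm) han, hne⟩
    have hfmax : fmax (fun i : Fin (n + 1) => x i) = 1 := by
      unfold fmax
      have h1' : (Finset.univ.sup fun i : Fin (n + 1) => (x i).val) = 1 := by
        apply Nat.le_antisymm
        · apply Finset.sup_le
          intro i _
          have := ZMod.val_lt (x i)
          omega
        · have hle := Finset.le_sup (f := fun i : Fin (n + 1) => (x i).val)
            (Finset.mem_univ (⟨a, Nat.lt_succ_of_le han⟩ : Fin (n + 1)))
          exact le_trans (le_of_eq (by show 1 = (x a).val; rw [hxa]; rfl)) hle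
      rw [h1']; simp
    have hamax : argmaxN (fun i : Fin (n + 1) => x i) = a := by
      have hSdef : {i : ℕ | ∃ h : i < n + 1,
            (fun i : Fin (n + 1) => x i) ⟨i, h⟩ = fmax fun i : Fin (n + 1) => x i}
          = {i : ℕ | i < n + 1 ∧ x i = 1} := by
        ext i
        simp only [Set.mem_setOf_eq, hfmax]
        exact ⟨fun ⟨h, he⟩ => ⟨h, he⟩, fun ⟨h, he⟩ => ⟨h, he⟩⟩
      unfold argmaxN
      rw [hSdef]
      apply le_antisymm
      · exact Nat.sInf_le ⟨Nat.lt_succ_of_le han, hxa⟩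
      · have hmem := Nat.sInf_mem (s := {i : ℕ | i < n + 1 ∧ x i = 1})
          ⟨a, Nat.lt_succ_of_le han, hxa⟩
        obtain ⟨hlt, heq⟩ := hmem
        exact Nat.find_min' hex ⟨Nat.lt_succ_iff.mp hlt, by rw [heq]; exact one_ne_zero⟩
    rw [hamax]
    -- each summand is the indicator that the index equals `a`
    have hterm : ∀ t, (∏ m ∈ Finset.range t, (1 + x m)) * x t
        = if t = a then 1 else 0 := by
      intro t
      rcases lt_trichotomy t a with hlt | heq | hgt
      · rw [hmin t hlt, mul_zero, if_neg (Nat.ne_of_lt hlt)]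
      · subst heq
        rw [if_pos rfl, Finset.prod_eq_one, one_mul, hxa]
        intro m hm
        rw [hmin m (Finset.mem_range.mp hm), add_zero]
      · rw [Finset.prod_eq_zero (Finset.mem_range.mpr hgt) (by rw [hxa]; decide),
          zero_mul, if_neg (Nat.ne_of_gt hgt)]
    have hsum : ∀ j ∈ Finset.range (k + 1),
        ∀ i ∈ Finset.range (min (2 ^ r - 1) (n - 2 ^ (r + 1) * j - 2 ^ r) + 1),
        (∏ m ∈ Finset.range (2 ^ (r + 1) * j + 2 ^ r + i), (1 + x m)) *
            x (2 ^ (r + 1) * j + 2 ^ r + i)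
          = if 2 ^ (r + 1) * j + 2 ^ r + i = a then 1 else 0 := fun j _ i _ => hterm _
    rw [Finset.sum_congr rfl (fun j hj => Finset.sum_congr rfl (fun i hi => hsum j hj i hi))]
    unfold digitP
    rcases Nat.mod_two_eq_zero_or_one (a / 2 ^ r) with hbit | hbit
    · -- digit 0 : no index in the sum equals a
      rw [hbit]
      symm
      simp only [Nat.cast_zero]
      apply Finset.sum_eq_zero
      intro j hj
      apply Finset.sum_eq_zero
      intro i hi
      rw [if_neg]
      intro hcon
      have hi' : i < 2 ^ r := by
        simp only [Finset.mem_range] at hi; omega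
      have := bit_of_decomp r j i hi'
      rw [hcon] at this
      omega
    · rw [hbit]
      -- extract the decomposition of a
      have hmod : a % 2 ^ (r + 1) / 2 ^ r = 1 := by
        have := (Nat.mod_mul_right_div_self a (2 ^ r) 2).symm
        rw [← pow_succ] at this
        omega
      have hmlt : a % 2 ^ (r + 1) < 2 ^ (r + 1) :=
        Nat.mod_lt _ (pow_pos (by norm_num : (0:ℕ) < 2) _)
      have hge : 2 ^ r ≤ a % 2 ^ (r + 1) := by
        rcases Nat.lt_or_ge (a % 2 ^ (r + 1)) (2 ^ r) with h | h
        · rw [Nat.div_eq_of_lt h] at hmod; omega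
        · exact h
      set j0 := a / 2 ^ (r + 1) with hj0
      set i0 := a % 2 ^ (r + 1) - 2 ^ r with hi0
      have hi0lt : i0 < 2 ^ r := by omega
      have hadec : a = 2 ^ (r + 1) * j0 + 2 ^ r + i0 := by
        have hdm : 2 ^ (r + 1) * j0 + a % 2 ^ (r + 1) = a := by
          rw [hj0]; exact Nat.div_add_mod a _
        omega
      have hj0k : j0 < k + 1 := by
        have h3 : 2 ^ (r + 1) * j0 < 2 ^ (r + 1) * (k + 1) := by omega
        exact Nat.lt_of_mul_lt_mul_left h3
      have hi0mem : i0 < min (2 ^ r - 1) (n - 2 ^ (r + 1) * j0 - 2 ^ r) + 1 := by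
        omega
      rw [Finset.sum_eq_single_of_mem j0 (Finset.mem_range.mpr hj0k)]
      · rw [Finset.sum_eq_single_of_mem i0 (Finset.mem_range.mpr hi0mem)]
        · rw [if_pos hadec.symm]; norm_num
        · intro i _ hne
          rw [if_neg]; omega
      · intro j _ hne
        apply Finset.sum_eq_zero
        intro i hi
        rw [if_neg]
        intro hcon
        have hi' : i < 2 ^ r := by simp only [Finset.mem_range] at hi; omega
        have hd := div_of_decomp r j i hi'
        rw [hcon] at hd
        omega
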